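/- Let ψ be a convex C² function on [0,∞) with ψ(0) = ψ'(0) = 0 and ψ' positive and concave, satisfying (x+y)(ψ(x+y) - ψ(x) - ψ(y)) ≤ 2(x ψ(y) + y ψ(x)) for all x,y > 0. Then for 0 ≤ σ₁ ≤ σ₂ ≤ 1 and all x,y > 0, (ψ(x+y) - ψ(x) - ψ(y)) x^{σ₁} y^{σ₂} ≤ 2( x^{1+σ₁}(x+y)^{σ₂-1} ψ(y) + y^{1+σ₂}(x+y)^{σ₁-1} ψ(x) ) ≤ 2( x^{σ₁+σ₂} ψ(y) + y^{σ₁+σ₂} ψ(x) ). -/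

import Mathlib

open Real Set

theorem convex_function_collision_estimate (ψ : ℝ → ℝ) (hconv : ConvexOn ℝ (Ici 0) ψ)
    (hC2 : ContDiffOn ℝ 2 ψ (Ici 0)) (hψ0 : ψ 0 = 0) (hψ'0 : deriv ψ 0 = 0)
    (hψ'pos : ∀ x > (0:ℝ), 0 < deriv ψ x) (hψ'conc : ConcaveOn ℝ (Ici 0) (deriv ψ))
    (hkey : ∀ x > (0:ℝ), ∀ y > (0:ℝ),
      (x + y) * (ψ (x + y) - ψ x - ψ y) ≤ 2 * (x * ψ y + y * ψ x))
    (σ₁ σ₂ : ℝ) (h1 : 0 ≤ σ₁) (h2 : σ₁ ≤ σ₂) (h3 : σ₂ ≤ 1)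
    (x y : ℝ) (hx : 0 < x) (hy : 0 < y) :
    (ψ (x + y) - ψ x - ψ y) * x ^ σ₁ * y ^ σ₂
      ≤ 2 * (x ^ (1 + σ₁) * (x + y) ^ (σ₂ - 1) * ψ y + y ^ (1 + σ₂) * (x + y) ^ (σ₁ - 1) * ψ x)
    ∧ 2 * (x ^ (1 + σ₁) * (x + y) ^ (σ₂ - 1) * ψ y + y ^ (1 + σ₂) * (x + y) ^ (σ₁ - 1) * ψ x)
      ≤ 2 * (x ^ (σ₁ + σ₂) * ψ y + y ^ (σ₁ + σ₂) * ψ x) := by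
  have hs : (0:ℝ) < x + y := by linarith
  -- ψ is nonneg on positives
  have hmono : StrictMonoOn ψ (Ici 0) := by
    apply strictMonoOn_of_deriv_pos (convex_Ici 0) hC2.continuousOn
    intro t ht
    rw [interior_Ici] at ht
    exact hψ'pos t ht
  have hψx : 0 ≤ ψ x := by
    have := hmono (mem_Ici.mpr le_rfl) (mem_Ici.mpr hx.le) hx
    linarith [hψ0 ▸ this]
  have hψy : 0 ≤ ψ y := by
    have := hmono (mem_Ici.mpr le_rfl) (mem_Ici.mpr hy.le) hy
    linarith [hψ0 ▸ this]
  have hp : (0:ℝ) ≤ x ^ σ₁ := Real.rpow_nonneg hx.le _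
  have hq : (0:ℝ) ≤ y ^ σ₂ := Real.rpow_nonneg hy.le _
  have hP : (0:ℝ) < x ^ (1 + σ₁) := Real.rpow_pos_of_pos hx _
  have hQ : (0:ℝ) < y ^ (1 + σ₂) := Real.rpow_pos_of_pos hy _
  have e1 : x ^ (1 + σ₁) = x * x ^ σ₁ := by
    rw [Real.rpow_add hx, Real.rpow_one]
  have e2 : y ^ (1 + σ₂) = y * y ^ σ₂ := by
    rw [Real.rpow_add hy, Real.rpow_one]
  have e3 : (x + y) ^ (σ₂ - 1) * (x + y) = (x + y) ^ σ₂ := by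
    rw [Real.rpow_sub hs, Real.rpow_one, div_mul_cancel₀ _ hs.ne']
  have e4 : (x + y) ^ (σ₁ - 1) * (x + y) = (x + y) ^ σ₁ := by
    rw [Real.rpow_sub hs, Real.rpow_one, div_mul_cancel₀ _ hs.ne']
  have q_le : y ^ σ₂ ≤ (x + y) ^ σ₂ :=
    Real.rpow_le_rpow hy.le (by linarith) (by linarith)
  have p_le : x ^ σ₁ ≤ (x + y) ^ σ₁ :=
    Real.rpow_le_rpow hx.le (by linarith) h1
  constructor
  · have hk := hkey x hx y hy
    have hk2 : ((x + y) * (ψ (x + y) - ψ x - ψ y)) * (x ^ σ₁ * y ^ σ₂)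
        ≤ (2 * (x * ψ y + y * ψ x)) * (x ^ σ₁ * y ^ σ₂) :=
      mul_le_mul_of_nonneg_right hk (mul_nonneg hp hq)
    have h6 : x * ψ y * (x ^ σ₁ * y ^ σ₂)
        ≤ x ^ (1 + σ₁) * (x + y) ^ (σ₂ - 1) * ψ y * (x + y) := by
      have : x ^ (1 + σ₁) * ψ y * (y ^ σ₂) ≤ x ^ (1 + σ₁) * ψ y * ((x + y) ^ σ₂) :=
        mul_le_mul_of_nonneg_left q_le (mul_nonneg hP.le hψy)
      calc x * ψ y * (x ^ σ₁ * y ^ σ₂) = x ^ (1 + σ₁) * ψ y * (y ^ σ₂) := by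
            rw [e1]; ring
        _ ≤ x ^ (1 + σ₁) * ψ y * ((x + y) ^ σ₂) := this
        _ = x ^ (1 + σ₁) * (x + y) ^ (σ₂ - 1) * ψ y * (x + y) := by rw [← e3]; ring
    have h7 : y * ψ x * (x ^ σ₁ * y ^ σ₂)
        ≤ y ^ (1 + σ₂) * (x + y) ^ (σ₁ - 1) * ψ x * (x + y) := by
      have : y ^ (1 + σ₂) * ψ x * (x ^ σ₁) ≤ y ^ (1 + σ₂) * ψ x * ((x + y) ^ σ₁) :=
        mul_le_mul_of_nonneg_left p_le (mul_nonneg hQ.le hψx)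
      calc y * ψ x * (x ^ σ₁ * y ^ σ₂) = y ^ (1 + σ₂) * ψ x * (x ^ σ₁) := by
            rw [e2]; ring
        _ ≤ y ^ (1 + σ₂) * ψ x * ((x + y) ^ σ₁) := this
        _ = y ^ (1 + σ₂) * (x + y) ^ (σ₁ - 1) * ψ x * (x + y) := by rw [← e4]; ring
    rw [← mul_le_mul_iff_of_pos_right hs]
    nlinarith [hk2, h6, h7]
  · have t1 : x ^ (1 + σ₁) * (x + y) ^ (σ₂ - 1) ≤ x ^ (σ₁ + σ₂) := by
      have hb : (x + y) ^ (σ₂ - 1) ≤ x ^ (σ₂ - 1) :=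
        Real.rpow_le_rpow_of_nonpos hx (by linarith) (by linarith)
      calc x ^ (1 + σ₁) * (x + y) ^ (σ₂ - 1) ≤ x ^ (1 + σ₁) * x ^ (σ₂ - 1) :=
            mul_le_mul_of_nonneg_left hb hP.le
        _ = x ^ (σ₁ + σ₂) := by rw [← Real.rpow_add hx]; ring_nf
    have t2 : y ^ (1 + σ₂) * (x + y) ^ (σ₁ - 1) ≤ y ^ (σ₁ + σ₂) := by
      have hb : (x + y) ^ (σ₁ - 1) ≤ y ^ (σ₁ - 1) :=
        Real.rpow_le_rpow_of_nonpos hy (by linarith) (by linarith)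
      calc y ^ (1 + σ₂) * (x + y) ^ (σ₁ - 1) ≤ y ^ (1 + σ₂) * y ^ (σ₁ - 1) :=
            mul_le_mul_of_nonneg_left hb hQ.le
        _ = y ^ (σ₁ + σ₂) := by rw [← Real.rpow_add hy]; ring_nf
    have := mul_le_mul_of_nonneg_right t1 hψy
    have := mul_le_mul_of_nonneg_right t2 hψx
    linarith
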